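/- arXiv:2501.01754 — 2 statements merged into one kernel-verified Lean document; each statement's English description precedes it below -/
import Mathlib

section
/- Let G be a group acting without edge inversions on a simplicial tree T, and let N be a normal subgroup of G. Then the quotient graph T/N is a tree if and only if N is generated by an equivariant family of subgroups {R_v} of G, i.e. N = ⟨R_v⟩. -/
open SimpleGraph

section TreePrelude

variable {V W : Type*} {G H : Type*}

/-- The action of `G` on the vertices preserves adjacency, i.e. `G` acts on the graph `T`
by graph automorphisms. -/
def IsGraphAction (G : Type*) [Group G] [MulAction G V] (T : SimpleGraph V) : Prop :=
  ∀ (g : G) (u v : V), T.Adj u v ↔ T.Adj (g • u) (g • v)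

/-- The action of `G` on the graph `T` has no edge inversions. -/
def NoEdgeInversions (G : Type*) [Group G] [MulAction G V] (T : SimpleGraph V) : Prop :=
  ∀ (g : G) (u v : V), T.Adj u v → ¬(g • u = v ∧ g • v = u)

/-- An equivariant family of subgroups for an action of `G` on (the vertex set of) a tree:
a subgroup `R v` of the stabilizer of each vertex `v`, with `g (R v) g⁻¹ = R (g • v)`. -/
structure EquivariantFamily (G : Type*) [Group G] (V : Type*) [MulAction G V] where
  R : V → Subgroup G
  le_stab : ∀ v : V, R v ≤ MulAction.stabilizer G v
  equivariant : ∀ (g : G) (v : V) (x : G), x ∈ R v → g * x * g⁻¹ ∈ R (g • v)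

/-- Vertex set of the quotient graph `T/N`: the `N`-orbits of vertices. -/
abbrev OrbQ (G : Type*) [Group G] (N : Subgroup G) (V : Type*) [MulAction G V] :=
  Quotient (MulAction.orbitRel N V)

/-- The class of a vertex in the quotient `T/N`. -/
def vmk [Group G] [MulAction G V] (N : Subgroup G) (v : V) : OrbQ G N V :=
  Quotient.mk (MulAction.orbitRel N V) v

/-- The quotient graph `T/N` (as a simple graph on the set of `N`-orbits of vertices). -/
def quotientGraph [Group G] [MulAction G V] (T : SimpleGraph V) (N : Subgroup G) :
    SimpleGraph (OrbQ G N V) where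
  Adj x y := x ≠ y ∧ ∃ u v : V, vmk N u = x ∧ vmk N v = y ∧ T.Adj u v
  symm := by
    constructor
    rintro x y ⟨hxy, u, v, hu, hv, huv⟩
    exact ⟨hxy.symm, v, u, hv, hu, huv.symm⟩
  loopless := by
    constructor
    rintro x ⟨h, -⟩
    exact h rfl

/-- The quotient graph `T/N`, regarded as a graph possibly with loops and multiple
edges, is a tree: the underlying simple graph is a tree, no edge of `T` descends to
a loop, and no two `N`-inequivalent edges descend to parallel edges. -/
def QuotIsTree [Group G] [MulAction G V] (T : SimpleGraph V) (N : Subgroup G) : Prop :=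
  (quotientGraph T N).IsTree ∧
  (∀ u v : V, T.Adj u v → vmk N u ≠ vmk N v) ∧
  (∀ u v u' v' : V, T.Adj u v → T.Adj u' v' → vmk N u = vmk N u' → vmk N v = vmk N v' →
    ∃ n : G, n ∈ N ∧ n • u = u' ∧ n • v = v')

/-- The action of the quotient group `G/N` on the `N`-orbits of vertices. -/
def qsmul [Group G] [MulAction G V] (N : Subgroup G) [N.Normal] (gbar : G ⧸ N)
    (x : OrbQ G N V) : OrbQ G N V :=
  Quotient.liftOn₂ gbar x (fun g v => vmk N (g • v)) (by
    intro g₁ v₁ g₂ v₂ hg hv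
    have hg' : g₁⁻¹ * g₂ ∈ N := (QuotientGroup.leftRel_apply).mp hg
    obtain ⟨n, hn⟩ := MulAction.orbitRel_apply.mp hv
    apply Quotient.sound
    refine MulAction.orbitRel_apply.mpr ?_
    refine ⟨⟨g₁ * (n : G) * (g₁⁻¹ * g₂)⁻¹ * g₁⁻¹, ?_⟩, ?_⟩
    · have : g₁ * ((n : G) * (g₁⁻¹ * g₂)⁻¹) * g₁⁻¹ ∈ N :=
        Subgroup.Normal.conj_mem ‹N.Normal› _ (N.mul_mem n.2 (N.inv_mem hg')) g₁
      simpa [mul_assoc] using this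
    · show (g₁ * (n : G) * (g₁⁻¹ * g₂)⁻¹ * g₁⁻¹) • (g₂ • v₂) = g₁ • v₁
      rw [← hn]
      show (g₁ * (n : G) * (g₁⁻¹ * g₂)⁻¹ * g₁⁻¹) • (g₂ • v₂) = g₁ • (n : G) • v₂
      rw [smul_smul, smul_smul]
      congr 1
      group)

/-- Acylindricity for an action on (the vertex set of) a simplicial graph, with respect to
the combinatorial metric: for every `ε` there are `R, C > 0` such that any two points at
distance at least `R` are simultaneously `ε`-coarsely stabilized by at most `C` elements. -/
def AcylTree {W H : Type*} (Q : SimpleGraph W) (act : H → W → W) : Prop :=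
  ∀ ε : ℕ, ∃ R C : ℕ, 0 < R ∧ 0 < C ∧ ∀ x y : W, R ≤ Q.dist x y →
    {h : H | Q.dist x (act h x) ≤ ε ∧ Q.dist y (act h y) ≤ ε}.Finite ∧
    Nat.card {h : H | Q.dist x (act h x) ≤ ε ∧ Q.dist y (act h y) ≤ ε} ≤ C

/-- `(k,C)`-acylindricity: the pointwise stabilizer of every edge path of length at least
`k` has at most `C` elements. -/
def KCAcylOn {W H : Type*} (Q : SimpleGraph W) (act : H → W → W) (k C : ℕ) : Prop :=
  ∀ (x y : W) (p : Q.Walk x y), k ≤ p.length →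
    {h : H | ∀ w ∈ p.support, act h w = w}.Finite ∧
    Nat.card {h : H | ∀ w ∈ p.support, act h w = w} ≤ C

/-- An element is elliptic for an action on a tree if it fixes a vertex. -/
def EllipticOn {W H : Type*} (act : H → W → W) (h : H) : Prop := ∃ x : W, act h x = x

/-- An element is hyperbolic for an action on a tree if it fixes no vertex. -/
def HyperbolicOn {W H : Type*} (act : H → W → W) (h : H) : Prop := ∀ x : W, act h x ≠ x

/-- The translation length of `h`. -/
noncomputable def translationLength {W H : Type*} (Q : SimpleGraph W) (act : H → W → W)
    (h : H) : ℕ :=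
  sInf (Set.range fun x : W => Q.dist x (act h x))

/-- The axis (minimizing set) of `h`. -/
def axisOf {W H : Type*} (Q : SimpleGraph W) (act : H → W → W) (h : H) : Set W :=
  {x : W | Q.dist x (act h x) = translationLength Q act h}

/-- Two hyperbolic isometries of a simplicial tree are independent if their axes overlap
in a finite (equivalently, bounded) set. -/
def IndependentOn {W H : Type*} (Q : SimpleGraph W) (act : H → W → W) (g h : H) : Prop :=
  (axisOf Q act g ∩ axisOf Q act h).Finite

/-- A tree action is non-elementary if there are infinitely many pairwise independent
hyperbolic elements. -/
def NonElemTree {W H : Type*} (Q : SimpleGraph W) (act : H → W → W) : Prop :=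
  ∃ f : ℕ → H, Function.Injective f ∧ (∀ i, HyperbolicOn act (f i)) ∧
    ∀ i j, i ≠ j → IndependentOn Q act (f i) (f j)

/-- The WPD condition for an element `h` of a group acting on a graph. -/
def IsWPDElt {W H : Type*} [Group H] (Q : SimpleGraph W) (act : H → W → W) (h : H) : Prop :=
  ∀ (s : W) (ε : ℕ), ∃ M : ℕ,
    {g : H | Q.dist s (act g s) ≤ ε ∧
      Q.dist (act (h ^ M) s) (act g (act (h ^ M) s)) ≤ ε}.Finite

/-- A non-elementary WPD action: two independent hyperbolic WPD elements. -/
def NonElemWPD {W H : Type*} [Group H] (Q : SimpleGraph W) (act : H → W → W) : Prop :=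
  ∃ g h : H, HyperbolicOn act g ∧ HyperbolicOn act h ∧ IndependentOn Q act g h ∧
    IsWPDElt Q act g ∧ IsWPDElt Q act h

end TreePrelude

namespace QuotTreeAux
open SimpleGraph Walk

variable {V : Type*} {G : Type*} [Group G] [MulAction G V]

lemma vmk_smul {N : Subgroup G} {n : G} (hn : n ∈ N) (x : V) :
    vmk N (n • x) = vmk N x := by
  apply Quotient.sound
  refine MulAction.orbitRel_apply.mpr ?_
  exact MulAction.mem_orbit_iff.mpr ⟨⟨n, hn⟩, rfl⟩

lemma exists_smul_of_vmk_eq {N : Subgroup G} {u v : V} (h : vmk N u = vmk N v) :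
    ∃ n : G, n ∈ N ∧ n • v = u := by
  have := MulAction.orbitRel_apply.mp (Quotient.exact h)
  obtain ⟨n, hn⟩ := MulAction.mem_orbit_iff.mp this
  exact ⟨(n : G), n.2, hn⟩

lemma vmk_eq_of_smul {N : Subgroup G} {n : G} (hn : n ∈ N) {u v : V} (h : n • v = u) :
    vmk N u = vmk N v := by rw [← h, vmk_smul hn]

/-- The graph automorphism given by `g`. -/
def tau {T : SimpleGraph V} (hact : IsGraphAction G T) (g : G) : T →g T where
  toFun := (g • ·)
  map_rel' := fun h => (hact g _ _).mp h

@[simp] lemma tau_apply {T : SimpleGraph V} (hact : IsGraphAction G T) (g : G) (x : V) :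
    tau hact g x = g • x := rfl

end QuotTreeAux

namespace QuotTreeAux
open SimpleGraph Walk

section BT
variable {W' : Type*} {Q : SimpleGraph W'}

/-- The walk has a backtrack: two consecutive edges traversed in opposite directions. -/
def HasBT : ∀ {x y : W'}, Q.Walk x y → Prop
  | _, _, .nil => False
  | _, _, .cons _ .nil => False
  | x, _, @Walk.cons _ _ _ _ _ _h₁ (@Walk.cons _ _ _ d _ h₂ q) =>
      x = d ∨ HasBT (Walk.cons h₂ q)

lemma hasBT_cons_of {x b y : W'} (h : Q.Adj x b) {q : Q.Walk b y} (hq : HasBT q) :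
    HasBT (Walk.cons h q) := by
  cases q with
  | nil => simp [HasBT] at hq
  | cons h₂ q' => exact Or.inr hq

lemma isPath_of_not_hasBT (hQ : Q.IsAcyclic) :
    ∀ {x y : W'} (p : Q.Walk x y), ¬ HasBT p → p.IsPath := by
  intro x y p
  classical
  induction p with
  | nil => intro _; exact Walk.IsPath.nil
  | @cons x b y h q IH =>
    intro hbt
    have hq : ¬ HasBT q := fun hh => hbt (hasBT_cons_of h hh)
    have hqpath : q.IsPath := IH hq
    rw [Walk.cons_isPath_iff]
    refine ⟨hqpath, fun hx => ?_⟩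
    -- x ∈ q.support; build a cycle
    cases q with
    | nil =>
      simp only [Walk.support_nil, List.mem_singleton] at hx
      exact h.ne hx
    | @cons b d y h' q' =>
      have hxd : x ≠ d := fun hxd => hbt (Or.inl hxd)
      have hxb : x ≠ b := fun hxb => h.ne hxb
      -- q₁ : Walk b x
      set q₁ := (Walk.cons h' q').takeUntil x hx with hq₁
      have hq₁path : q₁.IsPath := hqpath.takeUntil hx
      have hcyc : (Walk.cons h q₁).IsCycle := by
        rw [Walk.cons_isCycle_iff]
        refine ⟨hq₁path, fun he => ?_⟩
        have he' : s(x, b) ∈ (Walk.cons h' q').edges :=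
          Walk.edges_takeUntil_subset _ hx he
        simp only [Walk.edges_cons, List.mem_cons] at he'
        rcases he' with he' | he'
        · rw [Sym2.eq_iff] at he'
          rcases he' with ⟨h1, h2⟩ | ⟨h1, h2⟩
          · exact hxb h1
          · exact hxd h1
        · have : b ∈ q'.support := Walk.snd_mem_support_of_mem_edges _ he'
          rw [Walk.cons_isPath_iff] at hqpath
          exact hqpath.2 this
      exact hQ (Walk.cons h q₁) hcyc

lemma hasBT_of_closed (hQ : Q.IsAcyclic) {x y : W'} (p : Q.Walk x y) (hxy : x = y)
    (hlen : 1 ≤ p.length) : HasBT p := by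
  subst hxy
  by_contra hbt
  have hpath := isPath_of_not_hasBT hQ p hbt
  cases p with
  | nil => simp at hlen
  | cons h q =>
    rw [Walk.cons_isPath_iff] at hpath
    exact hpath.2 (Walk.end_mem_support q)

end BT
end QuotTreeAux

namespace QuotTreeAux
open SimpleGraph Walk

variable {V : Type*} {G : Type*} [Group G] [MulAction G V]

section Forward
variable {T : SimpleGraph V} {N : Subgroup G}

/-- The projection homomorphism to the quotient graph. -/
def phi (hb : ∀ u v : V, T.Adj u v → vmk N u ≠ vmk N v) : T →g quotientGraph T N where
  toFun := vmk N
  map_rel' := fun {u v} h => ⟨hb u v h, u, v, rfl, rfl, h⟩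

@[simp] lemma phi_apply (hb : ∀ u v : V, T.Adj u v → vmk N u ≠ vmk N v) (x : V) :
    phi hb x = vmk N x := rfl

lemma pullback_BT (hb : ∀ u v : V, T.Adj u v → vmk N u ≠ vmk N v) :
    ∀ {a b : V} (p : T.Walk a b), HasBT (p.map (phi hb)) →
      ∃ (x y z : V) (q : T.Walk a x) (r : T.Walk z b),
        T.Adj x y ∧ T.Adj y z ∧ vmk N x = vmk N z ∧
        p.length = q.length + r.length + 2 := by
  intro a b p
  induction p with
  | nil => intro hbt; simp [Walk.map_nil, HasBT] at hbt
  | @cons a a₁ b h p IH =>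
    intro hbt
    cases p with
    | nil => simp [Walk.map_cons, Walk.map_nil, HasBT] at hbt
    | @cons a₁ a₂ b h' p'' =>
      simp only [Walk.map_cons, HasBT, phi_apply] at hbt
      rcases hbt with heq | hbt'
      · exact ⟨a, a₁, a₂, Walk.nil, p'', h, h', heq, by simp⟩
      · obtain ⟨x, y, z, q, r, hxy, hyz, hxz, hlen⟩ := IH (by
          rw [Walk.map_cons]; exact hbt')
        refine ⟨x, y, z, Walk.cons h q, r, hxy, hyz, hxz, ?_⟩
        simp only [Walk.length_cons, hlen]
        omega

lemma forward_main (hact : IsGraphAction G T)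
    (hQacyc : (quotientGraph T N).IsAcyclic)
    (hb : ∀ u v : V, T.Adj u v → vmk N u ≠ vmk N v)
    (hc : ∀ u v u' v' : V, T.Adj u v → T.Adj u' v' → vmk N u = vmk N u' →
      vmk N v = vmk N v' → ∃ n : G, n ∈ N ∧ n • u = u' ∧ n • v = v') :
    ∀ (k : ℕ) {a b : V} (p : T.Walk a b), p.length ≤ k → vmk N a = vmk N b →
      ∃ s : G, s ∈ (⨆ v : V, (N ⊓ MulAction.stabilizer G v)) ∧ s • a = b := by
  intro k
  induction k with
  | zero =>
    intro a b p hlen hab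
    have : a = b := Walk.eq_of_length_eq_zero (Nat.le_zero.mp hlen)
    exact ⟨1, one_mem _, by simp [this]⟩
  | succ k IH =>
    intro a b p hlen hab
    rcases Nat.eq_zero_or_pos p.length with h0 | hpos
    · have : a = b := Walk.eq_of_length_eq_zero h0
      exact ⟨1, one_mem _, by simp [this]⟩
    · have hbt : HasBT (p.map (phi hb)) :=
        hasBT_of_closed hQacyc _ hab (by rwa [Walk.length_map])
      obtain ⟨x, y, z, q, r, hxy, hyz, hxz, hlen2⟩ := pullback_BT hb p hbt
      obtain ⟨m, hmN, hmzx, hmyy⟩ := hc z y x y hyz.symm hxy hxz.symm rfl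
      have hmS : m ∈ (⨆ v : V, (N ⊓ MulAction.stabilizer G v)) :=
        le_iSup (fun v : V => N ⊓ MulAction.stabilizer G v) y
          (Subgroup.mem_inf.mpr ⟨hmN, MulAction.mem_stabilizer_iff.mpr hmyy⟩)
      set W' : T.Walk a (m • b) :=
        q.append (((r.map (tau hact m)).copy hmzx rfl)) with hW'
      have hlen3 : W'.length ≤ k := by
        have hf : ((r.map (tau hact m)).copy hmzx rfl).length = r.length :=
          (Walk.length_copy _ _ _).trans (Walk.length_map _ _)
        have hsum : W'.length = q.length + r.length :=
          (Walk.length_append _ _).trans (congrArg (q.length + ·) hf)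
        omega
      have hab' : vmk N a = vmk N (m • b) := hab.trans (vmk_smul hmN b).symm
      obtain ⟨s, hs, hsab⟩ := IH W' hlen3 hab'
      exact ⟨m⁻¹ * s, mul_mem (inv_mem hmS) hs, by
        rw [mul_smul, hsab, inv_smul_smul]⟩

lemma forward_direction (htree : T.IsTree) (hact : IsGraphAction G T) (hN : N.Normal)
    (hQT : QuotIsTree T N) :
    ∃ fam : EquivariantFamily G V, N = ⨆ v : V, fam.R v := by
  obtain ⟨hQtree, hb, hc⟩ := hQT
  refine ⟨{ R := fun v => N ⊓ MulAction.stabilizer G v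
            le_stab := fun v => inf_le_right
            equivariant := by
              intro g v x hx
              obtain ⟨hx1, hx2⟩ := Subgroup.mem_inf.mp hx
              have hxv : x • v = v := MulAction.mem_stabilizer_iff.mp hx2
              refine Subgroup.mem_inf.mpr ⟨hN.conj_mem x hx1 g, ?_⟩
              show (g * x * g⁻¹) • (g • v) = g • v
              rw [mul_smul, mul_smul, inv_smul_smul, hxv] }, ?_⟩
  apply le_antisymm
  · intro n hn
    have hne : Nonempty V := htree.isConnected.nonempty
    have v0 : V := Classical.arbitrary V
    obtain ⟨w⟩ := htree.isConnected.preconnected v0 (n • v0)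
    obtain ⟨s, hs, hsv⟩ := forward_main hact hQtree.IsAcyclic hb hc w.length w le_rfl
      (vmk_smul hn v0).symm
    have hsN : s ∈ N := (iSup_le fun v => inf_le_left :
      (⨆ v : V, (N ⊓ MulAction.stabilizer G v)) ≤ N) hs
    have h2 : s⁻¹ * n ∈ N ⊓ MulAction.stabilizer G v0 := by
      refine Subgroup.mem_inf.mpr ⟨mul_mem (inv_mem hsN) hn, ?_⟩
      show (s⁻¹ * n) • v0 = v0
      rw [mul_smul, ← hsv, inv_smul_smul]
    have h3 : s⁻¹ * n ∈ (⨆ v : V, (N ⊓ MulAction.stabilizer G v)) :=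
      le_iSup (fun v : V => N ⊓ MulAction.stabilizer G v) v0 h2
    have : n = s * (s⁻¹ * n) := by group
    rw [this]
    exact mul_mem hs h3
  · exact iSup_le fun v => inf_le_left

end Forward
end QuotTreeAux

namespace QuotTreeAux
open SimpleGraph Walk

variable {V : Type*} {G : Type*} [Group G] [MulAction G V]

section Parity
variable {T : SimpleGraph V}

/-- Choice of the unique path between two vertices of a tree. -/
noncomputable def pathB (htree : T.IsTree) (x y : V) : T.Walk x y :=
  (((isTree_iff_existsUnique_path.mp htree).2 x y).exists).choose

lemma pathB_isPath (htree : T.IsTree) (x y : V) : (pathB htree x y).IsPath :=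
  (((isTree_iff_existsUnique_path.mp htree).2 x y).exists).choose_spec

lemma pathB_unique (htree : T.IsTree) {x y : V} {p : T.Walk x y} (hp : p.IsPath) :
    p = pathB htree x y :=
  ((isTree_iff_existsUnique_path.mp htree).2 x y).unique hp (pathB_isPath htree x y)

/-- Indicator of an edge predicate. -/
noncomputable def eInd (pred : Sym2 V → Prop) (e : Sym2 V) : ℕ :=
  @ite _ (pred e) (Classical.propDecidable _) 1 0

lemma eInd_pos {pred : Sym2 V → Prop} {e : Sym2 V} (h : pred e) : eInd pred e = 1 := by
  simp [eInd, h]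

lemma eInd_neg {pred : Sym2 V → Prop} {e : Sym2 V} (h : ¬ pred e) : eInd pred e = 0 := by
  simp [eInd, h]

/-- Number of edges of a walk satisfying a predicate. -/
noncomputable def eCount (pred : Sym2 V → Prop) {a b : V} (W : T.Walk a b) : ℕ :=
  W.edges.countP (fun e => @decide (pred e) (Classical.propDecidable _))

lemma eCount_nil (pred : Sym2 V → Prop) {a : V} : eCount pred (Walk.nil : T.Walk a a) = 0 := rfl

lemma eCount_cons (pred : Sym2 V → Prop) {a b c : V} (h : T.Adj a b) (W : T.Walk b c) :
    eCount pred (Walk.cons h W) = eCount pred W + eInd pred s(a, b) := by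
  simp only [eCount, Walk.edges_cons, List.countP_cons]
  by_cases hp : pred s(a, b)
  · rw [eInd_pos hp]; simp [hp]
  · rw [eInd_neg hp]; simp [hp]

lemma eCount_append (pred : Sym2 V → Prop) {a b c : V} (W₁ : T.Walk a b) (W₂ : T.Walk b c) :
    eCount pred (W₁.append W₂) = eCount pred W₁ + eCount pred W₂ := by
  simp only [eCount, Walk.edges_append, List.countP_append]

lemma eCount_concat (pred : Sym2 V → Prop) {a b c : V} (W : T.Walk a b) (h : T.Adj b c) :
    eCount pred (W.concat h) = eCount pred W + eInd pred s(b, c) := by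
  simp only [eCount, Walk.edges_concat, List.countP_append, List.countP_cons,
    List.countP_nil]
  by_cases hp : pred s(b, c)
  · rw [eInd_pos hp]; simp [hp]
  · rw [eInd_neg hp]; simp [hp]

lemma eCount_copy (pred : Sym2 V → Prop) {a b a' b' : V} (W : T.Walk a b)
    (h1 : a = a') (h2 : b = b') :
    eCount pred (W.copy h1 h2) = eCount pred W := by
  subst h1; subst h2; rfl

/-- The parity function associated to an edge predicate. -/
noncomputable def Fpar (htree : T.IsTree) (pred : Sym2 V → Prop) (v0 x : V) : ZMod 2 :=
  (eCount pred (pathB htree v0 x) : ZMod 2)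

lemma Fpar_adj (htree : T.IsTree) (pred : Sym2 V → Prop) (v0 : V) {x y : V}
    (h : T.Adj x y) :
    Fpar htree pred v0 y = Fpar htree pred v0 x + (eInd pred s(x, y) : ZMod 2) := by
  classical
  by_cases hy : y ∈ (pathB htree v0 x).support
  · -- the path to x passes through y, and its last step is the edge y-x
    have hDpath : ((pathB htree v0 x).dropUntil y hy).IsPath :=
      (pathB_isPath htree v0 x).dropUntil hy
    have hSpath : (Walk.cons h.symm Walk.nil : T.Walk y x).IsPath := by
      rw [Walk.cons_isPath_iff]
      exact ⟨Walk.IsPath.nil, by simp [h.ne']⟩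
    have hD : (pathB htree v0 x).dropUntil y hy = Walk.cons h.symm Walk.nil :=
      (pathB_unique htree hDpath).trans (pathB_unique htree hSpath).symm
    have hQ : (pathB htree v0 x).takeUntil y hy = pathB htree v0 y :=
      pathB_unique htree ((pathB_isPath htree v0 x).takeUntil hy)
    have hsplit : eCount pred (pathB htree v0 x) =
        eCount pred (pathB htree v0 y) + eInd pred s(y, x) := by
      conv_lhs => rw [← Walk.take_spec (pathB htree v0 x) hy]
      rw [eCount_append, hQ, hD, eCount_cons, eCount_nil, zero_add]
    have hswap : s(y, x) = s(x, y) := Sym2.eq_swap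
    rw [hswap] at hsplit
    unfold Fpar
    rw [hsplit]
    push_cast
    rw [add_assoc, CharTwo.add_self_eq_zero, add_zero]
  · -- extend the path to x by the edge x-y
    have hWpath : ((pathB htree v0 x).concat h).IsPath := by
      rw [Walk.isPath_def, Walk.support_concat,
        List.nodup_append]
      refine ⟨(pathB_isPath htree v0 x).support_nodup, List.nodup_singleton y, ?_⟩
      intro z hz w hw hzw
      rw [List.mem_singleton] at hw
      subst hw
      exact hy (hzw ▸ hz)
    have hW : (pathB htree v0 x).concat h = pathB htree v0 y := pathB_unique htree hWpath
    unfold Fpar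
    rw [← hW, eCount_concat]
    push_cast
    ring

lemma eCount_parity (htree : T.IsTree) (pred : Sym2 V → Prop) (v0 : V) :
    ∀ {a b : V} (W : T.Walk a b),
      (eCount pred W : ZMod 2) = Fpar htree pred v0 b - Fpar htree pred v0 a := by
  intro a b W
  induction W with
  | nil => rw [eCount_nil]; simp
  | @cons a w b h W' IH =>
    rw [eCount_cons]
    push_cast
    rw [IH, Fpar_adj htree pred v0 h]
    ring
end Parity
end QuotTreeAux

namespace QuotTreeAux
open SimpleGraph Walk

variable {V : Type*} {G : Type*} [Group G] [MulAction G V]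

section PredE
variable {T : SimpleGraph V}

/-- The predicate: the edge is in the `N`-orbit of `e₀`. -/
def predE (N : Subgroup G) (e₀ : Sym2 V) : Sym2 V → Prop :=
  fun e => ∃ n : G, n ∈ N ∧ Sym2.map (fun t => n • t) e = e₀

lemma predE_refl (N : Subgroup G) (e₀ : Sym2 V) : predE N e₀ e₀ := by
  refine ⟨1, one_mem _, ?_⟩
  have h1 : (fun t : V => (1 : G) • t) = id := funext fun t => one_smul G t
  rw [h1, Sym2.map_id, id]

lemma predE_smul_iff {N : Subgroup G} {e₀ : Sym2 V} {g : G} (hg : g ∈ N) (e : Sym2 V) :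
    predE N e₀ (Sym2.map (fun t => g • t) e) ↔ predE N e₀ e := by
  constructor
  · rintro ⟨n, hn, h⟩
    refine ⟨n * g, mul_mem hn hg, ?_⟩
    rw [Sym2.map_map] at h
    rw [← h]
    congr 1
    funext t
    exact mul_smul n g t
  · rintro ⟨n, hn, h⟩
    refine ⟨n * g⁻¹, mul_mem hn (inv_mem hg), ?_⟩
    rw [Sym2.map_map]
    have hfun : ((fun t : V => (n * g⁻¹) • t) ∘ (fun t : V => g • t)) =
        (fun t : V => n • t) := by
      funext t
      show (n * g⁻¹) • g • t = n • t
      rw [smul_smul, inv_mul_cancel_right]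
    rw [hfun]
    exact h

lemma vmk_map_of_predE {N : Subgroup G} {e₀ e : Sym2 V} (h : predE N e₀ e) :
    Sym2.map (vmk N) e = Sym2.map (vmk N) e₀ := by
  obtain ⟨n, hn, hmap⟩ := h
  conv_rhs => rw [← hmap, Sym2.map_map]
  congr 1
  funext t
  exact (vmk_smul hn t).symm

lemma eCount_map_eq (hact : IsGraphAction G T) {N : Subgroup G} {e₀ : Sym2 V} {g : G}
    (hg : g ∈ N) {a b : V} (W : T.Walk a b) :
    eCount (predE N e₀) (W.map (tau hact g)) = eCount (predE N e₀) W := by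
  simp only [eCount, Walk.edges_map, List.countP_map]
  congr 1
  funext e
  simp only [Function.comp_apply]
  exact decide_eq_decide.mpr (predE_smul_iff hg e)

lemma Fpar_smul (htree : T.IsTree) (hact : IsGraphAction G T) {N : Subgroup G}
    {e₀ : Sym2 V} {g : G} (hgN : g ∈ N) {v : V} (hgv : g • v = v) (v0 x : V) :
    Fpar htree (predE N e₀) v0 (g • x) = Fpar htree (predE N e₀) v0 x := by
  set pred := predE N e₀ with hpred
  set W1 : T.Walk v0 (g • x) :=
    (pathB htree v0 v).append
      (((pathB htree v x).map (tau hact g)).copy hgv rfl) with hW1def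
  have hW1' := eCount_parity htree pred v0 W1
  have hW2 := eCount_parity htree pred v0 ((pathB htree v0 v).append (pathB htree v x))
  rw [eCount_append] at hW1'
  have hc := eCount_copy pred ((pathB htree v x).map (tau hact g)) hgv rfl
  have hW1 : ((eCount pred (pathB htree v0 v) +
      eCount pred ((pathB htree v x).map (tau hact g)) : ℕ) : ZMod 2) =
      Fpar htree pred v0 (g • x) - Fpar htree pred v0 v0 :=
    (congrArg (fun t : ℕ => ((eCount pred (pathB htree v0 v) + t : ℕ) : ZMod 2)) hc).symm.trans hW1'
  rw [hpred, eCount_map_eq hact hgN] at hW1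
  rw [eCount_append] at hW2
  rw [← hpred] at hW1
  have heq : Fpar htree pred v0 (g • x) - Fpar htree pred v0 v0 =
      Fpar htree pred v0 x - Fpar htree pred v0 v0 := by
    rw [← hW1, ← hW2]
  exact sub_left_inj.mp heq

lemma Fpar_N (htree : T.IsTree) (hact : IsGraphAction G T) {N : Subgroup G}
    {e₀ : Sym2 V} (fam : EquivariantFamily G V) (hNsup : N = ⨆ v : V, fam.R v)
    (v0 : V) {n : G} (hn : n ∈ N) (x : V) :
    Fpar htree (predE N e₀) v0 (n • x) = Fpar htree (predE N e₀) v0 x := by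
  let K : Subgroup G :=
    { carrier := {g : G | ∀ x : V,
        Fpar htree (predE N e₀) v0 (g • x) = Fpar htree (predE N e₀) v0 x}
      one_mem' := by intro x; rw [one_smul]
      mul_mem' := by
        intro a b ha hb x
        rw [mul_smul, ha (b • x), hb x]
      inv_mem' := by
        intro a ha x
        have := ha (a⁻¹ • x)
        rw [smul_inv_smul] at this
        exact this.symm }
  have hNK : N ≤ K := by
    rw [hNsup]
    apply iSup_le
    intro v g hg
    have hgN : g ∈ N := by rw [hNsup]; exact le_iSup fam.R v hg
    have hgv : g • v = v := MulAction.mem_stabilizer_iff.mp (fam.le_stab v hg)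
    exact fun x => Fpar_smul htree hact hgN hgv v0 x
  exact hNK hn x

end PredE
end QuotTreeAux

namespace QuotTreeAux
open SimpleGraph Walk

variable {V : Type*} {G : Type*} [Group G] [MulAction G V]

section Backward
variable {T : SimpleGraph V} {N : Subgroup G}

lemma backward_b (htree : T.IsTree) (hact : IsGraphAction G T)
    (fam : EquivariantFamily G V) (hNsup : N = ⨆ v : V, fam.R v) :
    ∀ u v : V, T.Adj u v → vmk N u ≠ vmk N v := by
  intro u v huv heq
  haveI : Nonempty V := htree.isConnected.nonempty
  set v0 := Classical.arbitrary V
  obtain ⟨n, hnN, hnv⟩ := exists_smul_of_vmk_eq heq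
  set pred := predE N s(u, v) with hpreddef
  have h1 : Fpar htree pred v0 v = Fpar htree pred v0 u + (eInd pred s(u, v) : ZMod 2) :=
    Fpar_adj htree pred v0 huv
  have h2 : Fpar htree pred v0 u = Fpar htree pred v0 v := by
    rw [← hnv]
    exact Fpar_N htree hact fam hNsup v0 hnN v
  rw [h2, eInd_pos (predE_refl N s(u, v))] at h1
  have h3 := left_eq_add.mp h1
  rw [Nat.cast_one] at h3
  exact one_ne_zero h3

lemma backward_rotation (htree : T.IsTree) (hact : IsGraphAction G T)
    (fam : EquivariantFamily G V) (hNsup : N = ⨆ v : V, fam.R v)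
    {w a b : V} (hwa : T.Adj w a) (hwb : T.Adj w b) {n : G} (hn : n ∈ N)
    (hab : n • a = b) :
    ∃ m : G, m ∈ N ∧ m • w = w ∧ m • a = b := by
  haveI : Nonempty V := htree.isConnected.nonempty
  set v0 := Classical.arbitrary V
  set pred := predE N s(a, w) with hpreddef
  have hF1 : Fpar htree pred v0 w = Fpar htree pred v0 a + (eInd pred s(a, w) : ZMod 2) :=
    Fpar_adj htree pred v0 hwa.symm
  have hF2 : Fpar htree pred v0 b = Fpar htree pred v0 w + (eInd pred s(w, b) : ZMod 2) :=
    Fpar_adj htree pred v0 hwb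
  have hF3 : Fpar htree pred v0 b = Fpar htree pred v0 a := by
    rw [← hab]
    exact Fpar_N htree hact fam hNsup v0 hn a
  by_cases hp : predE N s(a, w) s(w, b)
  · obtain ⟨k, hk, hkmap⟩ := hp
    rw [Sym2.map_pair_eq, Sym2.eq_iff] at hkmap
    rcases hkmap with ⟨h1, h2⟩ | ⟨h1, h2⟩
    · exfalso
      exact backward_b htree hact fam hNsup w a hwa (vmk_eq_of_smul hk h1).symm
    · refine ⟨k⁻¹, inv_mem hk, ?_, ?_⟩
      · rw [inv_smul_eq_iff]; exact h1.symm
      · rw [inv_smul_eq_iff]; exact h2.symm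
  · exfalso
    rw [eInd_neg hp, Nat.cast_zero, add_zero] at hF2
    rw [eInd_pos (predE_refl N s(a, w))] at hF1
    have hcontr : Fpar htree pred v0 a = Fpar htree pred v0 a + ((1 : ℕ) : ZMod 2) :=
      calc Fpar htree pred v0 a = Fpar htree pred v0 b := hF3.symm
        _ = Fpar htree pred v0 w := hF2
        _ = _ := hF1
    have h3 := left_eq_add.mp hcontr
    rw [Nat.cast_one] at h3
    exact one_ne_zero h3

lemma backward_c (htree : T.IsTree) (hact : IsGraphAction G T)
    (fam : EquivariantFamily G V) (hNsup : N = ⨆ v : V, fam.R v) :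
    ∀ u v u' v' : V, T.Adj u v → T.Adj u' v' → vmk N u = vmk N u' →
      vmk N v = vmk N v' → ∃ n : G, n ∈ N ∧ n • u = u' ∧ n • v = v' := by
  intro u v u' v' huv hu'v' h3 h4
  obtain ⟨n₁, hn₁, hn₁u⟩ := exists_smul_of_vmk_eq h3.symm
  have hadj : T.Adj u' (n₁ • v) := by
    have := (hact n₁ u v).mp huv
    rwa [hn₁u] at this
  have hvmk : vmk N v' = vmk N (n₁ • v) := by
    rw [vmk_smul hn₁]; exact h4.symm
  obtain ⟨n₂, hn₂, hn₂v⟩ := exists_smul_of_vmk_eq hvmk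
  obtain ⟨m, hmN, hmw, hma⟩ :=
    backward_rotation htree hact fam hNsup hadj hu'v' hn₂ hn₂v
  refine ⟨m * n₁, mul_mem hmN hn₁, ?_, ?_⟩
  · rw [mul_smul, hn₁u, hmw]
  · rw [mul_smul, hma]

lemma backward_conn (htree : T.IsTree) :
    (quotientGraph T N).Connected := by
  haveI : Nonempty V := htree.isConnected.nonempty
  have key : ∀ {u v : V} (p : T.Walk u v),
      (quotientGraph T N).Reachable (vmk N u) (vmk N v) := by
    intro u v p
    induction p with
    | nil => exact Reachable.refl _
    | @cons u w v h q IH =>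
      by_cases he : vmk N u = vmk N w
      · rw [he]; exact IH
      · refine (SimpleGraph.Adj.reachable ?_).trans IH
        exact (⟨he, u, w, rfl, rfl, h⟩ : (quotientGraph T N).Adj (vmk N u) (vmk N w))
  rw [connected_iff]
  refine ⟨?_, ⟨vmk N (Classical.arbitrary V)⟩⟩
  intro x y
  obtain ⟨u, hu⟩ := Quot.exists_rep x
  obtain ⟨v, hv⟩ := Quot.exists_rep y
  rw [← hu, ← hv]
  obtain ⟨p⟩ := htree.isConnected.preconnected u v
  exact key p

lemma lift_walk (hact : IsGraphAction G T) :
    ∀ {α β : OrbQ G N V} (c : (quotientGraph T N).Walk α β) (a : V), vmk N a = α →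
      ∃ (b : V) (W : T.Walk a b), vmk N b = β ∧ W.length = c.length ∧
        W.edges.map (Sym2.map (vmk N)) = c.edges ∧
        W.support.map (vmk N) = c.support := by
  intro α β c
  induction c with
  | nil =>
    intro a ha
    exact ⟨a, Walk.nil, ha, by simp, by simp, by simp [ha]⟩
  | @cons α γ β hadj c IH =>
    intro a ha
    obtain ⟨hne, u, v, hu, hv, huv⟩ := hadj
    obtain ⟨n, hnN, hnu⟩ := exists_smul_of_vmk_eq (ha.trans hu.symm)
    have hadj' : T.Adj a (n • v) := by
      have := (hact n u v).mp huv
      rwa [hnu] at this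
    have hv' : vmk N (n • v) = γ := (vmk_smul hnN v).trans hv
    obtain ⟨b, W, hbβ, hlen, hedges, hsupp⟩ := IH (n • v) hv'
    refine ⟨b, Walk.cons hadj' W, hbβ, ?_, ?_, ?_⟩
    · exact congrArg (· + 1) hlen
    · simp only [Walk.edges_cons, List.map_cons, Sym2.map_pair_eq, ha, hv', hedges]; rfl
    · simp only [Walk.support_cons, List.map_cons, ha, hsupp]; rfl

lemma backward_acyclic (htree : T.IsTree) (hact : IsGraphAction G T)
    (fam : EquivariantFamily G V) (hNsup : N = ⨆ v : V, fam.R v) :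
    (quotientGraph T N).IsAcyclic := by
  haveI : Nonempty V := htree.isConnected.nonempty
  set v0 := Classical.arbitrary V
  intro α c hcyc
  have hlen3 : 3 ≤ c.length := hcyc.three_le_length
  have hedgesnodup : c.edges.Nodup := hcyc.edges_nodup
  obtain ⟨a, ha⟩ := Quot.exists_rep α
  obtain ⟨b, W, hb, hlen, hedges, hsupp⟩ := lift_walk hact c a ha
  by_cases hab : a = b
  · subst hab
    refine htree.IsAcyclic W ?_
    rw [Walk.isCycle_def, Walk.isTrail_def]
    refine ⟨?_, ?_, ?_⟩
    · exact List.Nodup.of_map _ (by rw [hedges]; exact hedgesnodup)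
    · intro hWnil
      rw [hWnil] at hlen
      simp only [Walk.length_nil] at hlen
      omega
    · have htail : c.support.tail = W.support.tail.map (vmk N) := by
        rw [← hsupp]
        cases hW : W.support with
        | nil => rfl
        | cons x l => rfl
      exact List.Nodup.of_map _ (by rw [← htail]; exact hcyc.support_nodup)
  · obtain ⟨n, hnN, hnb⟩ := exists_smul_of_vmk_eq (ha.trans hb.symm)
    cases W with
    | nil => exact hab rfl
    | @cons a a₁ b h W₁ =>
      set pred := predE N s(a, a₁) with hpreddef
      have hce : c.edges =
          Sym2.map (vmk N) s(a, a₁) :: W₁.edges.map (Sym2.map (vmk N)) := by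
        rw [← hedges]; simp [Walk.edges_cons]
      have hcount1 : eCount pred W₁ = 0 := by
        rw [eCount, List.countP_eq_zero]
        intro e he
        simp only [decide_eq_true_eq]
        intro hpe
        have hmapeq := vmk_map_of_predE hpe
        rw [hce] at hedgesnodup
        obtain ⟨hhead, -⟩ := List.nodup_cons.mp hedgesnodup
        exact hhead (hmapeq ▸ List.mem_map_of_mem (f := Sym2.map (vmk N)) he)
      have hcount : eCount pred (Walk.cons h W₁) = 1 := by
        rw [eCount_cons, hcount1, eInd_pos (predE_refl N s(a, a₁))]
      have hpar := eCount_parity htree pred v0 (Walk.cons h W₁)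
      have hFab : Fpar htree pred v0 a = Fpar htree pred v0 b := by
        rw [← hnb]
        exact Fpar_N htree hact fam hNsup v0 hnN b
      rw [hcount, hFab, sub_self, Nat.cast_one] at hpar
      exact one_ne_zero hpar

end Backward
end QuotTreeAux

/-- Proposition: quotients of trees.
Let `G` be a group acting without edge inversions on a simplicial tree `T`, and let `N` be
a normal subgroup of `G`.  The quotient graph `T/N` is a tree if and only if `N` is
generated by an equivariant family of subgroups `{R_v}` of `G`, i.e. `N = ⟨R_v⟩`. -/
theorem quotient_graph_is_tree_iff_generated_by_equivariant_family
    {V G : Type*} [Group G] [MulAction G V] (T : SimpleGraph V)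
    (htree : T.IsTree) (hact : IsGraphAction G T) (hinv : NoEdgeInversions G T)
    (N : Subgroup G) (hN : N.Normal) :
    QuotIsTree T N ↔ ∃ fam : EquivariantFamily G V, N = ⨆ v : V, fam.R v := by
  constructor
  · intro hQT
    exact QuotTreeAux.forward_direction htree hact hN hQT
  · rintro ⟨fam, hNsup⟩
    exact ⟨⟨QuotTreeAux.backward_conn htree,
        QuotTreeAux.backward_acyclic htree hact fam hNsup⟩,
      QuotTreeAux.backward_b htree hact fam hNsup,
      QuotTreeAux.backward_c htree hact fam hNsup⟩
end

section
/- Let (Γ,𝒢) be a finite graph of groups with Bass-Serre tree T and G = π₁(Γ,𝒢). Let Γ̃ be a lift of Γ in T (a fundamental domain), D = diam(Γ̃), and ṽ₀ a base vertex of Γ̃. Then the generating set X = {g ∈ G : d_T(ṽ₀, gṽ₀) ≤ 2D+1} of G and the standard generating set Y = (⊔_{v∈V(Γ)} G_v) ⊔ {stable letters of Γ} are equivalent, i.e. sup_{y∈Y} |y|_X < ∞ and sup_{x∈X} |x|_Y < ∞ (indeed every x ∈ X has Y-word length at most 4D+3). -/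
open SimpleGraph

section MetricPrelude

variable {G : Type*}

/-- Word length of `g` with respect to the (symmetrized) subset `X`. -/
noncomputable def wordLength [Group G] (X : Set G) (g : G) : ℕ :=
  sInf {n : ℕ | ∃ l : List G, (∀ a ∈ l, a ∈ X ∨ a⁻¹ ∈ X) ∧ l.prod = g ∧ l.length = n}

/-- `X ⪯ Y`: the generating set `X` is dominated by `Y`,
i.e. `sup_{y ∈ Y} |y|_X < ∞`. -/
def GenSetDominatedBy [Group G] (X Y : Set G) : Prop :=
  ∃ M : ℕ, ∀ y ∈ Y, wordLength X y ≤ M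

/-- Distance in the Cayley graph of `G` with respect to `X`. -/
noncomputable def cayDist [Group G] (X : Set G) (g h : G) : ℕ := wordLength X (g⁻¹ * h)

/-- Gromov's four point condition for an (ℕ-valued) metric. -/
def FourPointHyp {α : Type*} (d : α → α → ℕ) : Prop :=
  ∃ δ : ℕ, ∀ a b c e : α,
    d a b + d c e ≤ max (d a c + d b e) (d a e + d b c) + δ

/-- The equivalence class of the generating set `X` belongs to `𝒜𝓗(G)`:
`X` generates `G`, the Cayley graph `Γ(G,X)` is hyperbolic, and the natural action of
`G` on it is acylindrical. -/
noncomputable def InAH [Group G] (X : Set G) : Prop :=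
  Subgroup.closure X = ⊤ ∧
  FourPointHyp (cayDist X) ∧
  (∀ ε : ℕ, ∃ R C : ℕ, 0 < R ∧ 0 < C ∧ ∀ x y : G, R ≤ cayDist X x y →
    {g : G | cayDist X x (g * x) ≤ ε ∧ cayDist X y (g * y) ≤ ε}.Finite ∧
    Nat.card {g : G | cayDist X x (g * x) ≤ ε ∧ cayDist X y (g * y) ≤ ε} ≤ C)

/-- `[Y]` is the largest element of `𝒜𝓗(G)`. -/
noncomputable def IsLargestAH [Group G] (Y : Set G) : Prop :=
  InAH Y ∧ ∀ X : Set G, InAH X → GenSetDominatedBy X Y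

/-- The action of `G` on `S` is by isometries. -/
def IsometricAction (G S : Type*) [Group G] [PseudoMetricSpace S] [MulAction G S] : Prop :=
  ∀ (g : G) (x y : S), dist (g • x) (g • y) = dist x y

/-- Acylindricity of an action on a metric space. -/
def AcylMetric (G S : Type*) [Group G] [PseudoMetricSpace S] [MulAction G S] : Prop :=
  ∀ ε : ℝ, 0 < ε → ∃ R N : ℝ, 0 < R ∧ 0 < N ∧ ∀ x y : S, R ≤ dist x y →
    {g : G | dist x (g • x) ≤ ε ∧ dist y (g • y) ≤ ε}.Finite ∧
    (Nat.card {g : G | dist x (g • x) ≤ ε ∧ dist y (g • y) ≤ ε} : ℝ) ≤ N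

/-- A `δ`-hyperbolic metric space (four point condition). -/
def GromovHyp (S : Type*) [PseudoMetricSpace S] : Prop :=
  ∃ δ : ℝ, 0 ≤ δ ∧ ∀ x y z w : S,
    dist x y + dist z w ≤ max (dist x z + dist y w) (dist x w + dist y z) + 2 * δ

/-- A virtually cyclic group. -/
def VirtuallyCyclic (G : Type*) [Group G] : Prop :=
  ∃ H : Subgroup G, H.FiniteIndex ∧ IsCyclic H

/-- A group is acylindrically hyperbolic if it admits a non-elementary acylindrical
isometric action on a hyperbolic metric space.  By Osin's classification, for an
acylindrical action non-elementarity is equivalent to: orbits are unbounded and the group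
is not virtually cyclic. -/
def AcylindricallyHyperbolic (G : Type*) [Group G] : Prop :=
  ∃ (S : Type) (_ : MetricSpace S) (_ : MulAction G S),
    IsometricAction G S ∧ GromovHyp S ∧ AcylMetric G S ∧
    (∀ s : S, ¬ Bornology.IsBounded (MulAction.orbit G s)) ∧ ¬ VirtuallyCyclic G

end MetricPrelude

section AuxProof

variable {V G : Type*} [Group G] [MulAction G V]

/-- smul as a graph homomorphism. -/
private def smulHom (T : SimpleGraph V) (hact : IsGraphAction G T) (g : G) : T →g T where
  toFun := (g • ·)
  map_rel' := fun h => (hact g _ _).mp h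

private lemma dist_smul_eq (T : SimpleGraph V) (hconn : T.Connected)
    (hact : IsGraphAction G T) (g : G) (a b : V) :
    T.dist (g • a) (g • b) = T.dist a b := by
  have key : ∀ (g : G) (a b : V), T.dist (g • a) (g • b) ≤ T.dist a b := by
    intro g a b
    obtain ⟨p, hp⟩ := hconn.exists_walk_length_eq_dist a b
    have := SimpleGraph.dist_le (p.map (smulHom T hact g))
    rwa [SimpleGraph.Walk.length_map, hp] at this
  refine le_antisymm (key g a b) ?_
  have := key g⁻¹ (g • a) (g • b)
  simpa using this

/-- The "covered" relation: `{a,b}` is a translate of an edge between the fundamental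
domain `S` and a `Y`-translate of `S`. -/
private def IsCov (S : Set V) (Y : Set G) (a b : V) : Prop :=
  ∃ g y : G, ∃ u s : V, u ∈ S ∧ s ∈ S ∧ (y = 1 ∨ y ∈ Y ∨ y⁻¹ ∈ Y) ∧
    ((a = g • u ∧ b = g • y • s) ∨ (b = g • u ∧ a = g • y • s))

/-- The subgraph of covered edges. -/
private def covG (T : SimpleGraph V) (S : Set V) (Y : Set G) : SimpleGraph V where
  Adj a b := T.Adj a b ∧ IsCov S Y a b
  symm := by
    constructor
    rintro a b ⟨h, g, y, u, s, hu, hs, hy, hc⟩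
    exact ⟨h.symm, g, y, u, s, hu, hs, hy, hc.symm⟩
  loopless := ⟨fun a h => T.irrefl h.1⟩

private lemma covG_smul (T : SimpleGraph V) (S : Set V) (Y : Set G)
    (hact : IsGraphAction G T) (g : G) {a b : V} (h : (covG T S Y).Adj a b) :
    (covG T S Y).Adj (g • a) (g • b) := by
  obtain ⟨hT, g', y, u, s, hu, hs, hy, hc⟩ := h
  refine ⟨(hact g a b).mp hT, g * g', y, u, s, hu, hs, hy, ?_⟩
  rcases hc with ⟨h1, h2⟩ | ⟨h1, h2⟩
  · exact Or.inl ⟨by rw [h1, mul_smul], by rw [h2, mul_smul]⟩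
  · exact Or.inr ⟨by rw [h1, mul_smul], by rw [h2, mul_smul]⟩

private def inclHom (T : SimpleGraph V) (S : Set V) (Y : Set G) :
    (T.induce S) →g covG T S Y where
  toFun := Subtype.val
  map_rel' := by
    rintro ⟨a, ha⟩ ⟨b, hb⟩ h
    exact ⟨h, 1, 1, a, b, ha, hb, Or.inl rfl, Or.inl ⟨by simp, by simp⟩⟩

private def covSmulHom (T : SimpleGraph V) (S : Set V) (Y : Set G)
    (hact : IsGraphAction G T) (g : G) : covG T S Y →g covG T S Y where
  toFun := (g • ·)
  map_rel' := fun h => covG_smul T S Y hact g h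

/-- Every edge of the tree is covered. -/
private lemma adj_covG_of_adj (T : SimpleGraph V) (htree : T.IsTree)
    (hact : IsGraphAction G T)
    (S : Set V) (hSconn : (T.induce S).Connected)
    (hfd : ∀ v : V, ∃ g : G, ∃ u ∈ S, g • u = v)
    (v0 : V) (hv0 : v0 ∈ S)
    (F : Set G) (hF : ∀ f ∈ F, ∃ u ∈ S, ∃ w ∈ S, T.Adj u (f • w))
    (Y : Set G) (hY : Y = (⋃ u ∈ S, (MulAction.stabilizer G u : Set G)) ∪ F)
    (hYgen : Subgroup.closure Y = ⊤) :
    ∀ a b : V, T.Adj a b → (covG T S Y).Adj a b := by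
  -- vertices of S are connected in covG
  have R1 : ∀ u ∈ S, ∀ u' ∈ S, (covG T S Y).Reachable u u' := by
    intro u hu u' hu'
    have hreach : (T.induce S).Reachable ⟨u, hu⟩ ⟨u', hu'⟩ := hSconn ⟨u, hu⟩ ⟨u', hu'⟩
    exact hreach.map (inclHom T S Y)
  have R2 : ∀ (g : G) (a b : V), (covG T S Y).Reachable a b →
      (covG T S Y).Reachable (g • a) (g • b) := by
    intro g a b h
    exact h.map (covSmulHom T S Y hact g)
  have Q : ∀ g : G, (covG T S Y).Reachable v0 (g • v0) := by
    intro g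
    have hg : g ∈ Subgroup.closure Y := hYgen ▸ Subgroup.mem_top g
    induction hg using Subgroup.closure_induction with
    | mem y hy =>
      rw [hY] at hy
      rcases hy with hy | hy
      · obtain ⟨u, hu⟩ := Set.mem_iUnion.mp hy
        obtain ⟨huS, hyu⟩ := Set.mem_iUnion.mp hu
        have hfix : y • u = u := hyu
        refine (R1 v0 hv0 u huS).trans ?_
        have := R2 y u v0 (R1 u huS v0 hv0)
        rwa [hfix] at this
      · obtain ⟨u, huS, w, hwS, hadj⟩ := hF y hy
        have hyY : y ∈ Y := by rw [hY]; exact Or.inr hy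
        have hcov : (covG T S Y).Adj u (y • w) :=
          ⟨hadj, 1, y, u, w, huS, hwS, Or.inr (Or.inl hyY),
            Or.inl ⟨by simp, by simp⟩⟩
        exact (R1 v0 hv0 u huS).trans (hcov.reachable.trans (R2 y w v0 (R1 w hwS v0 hv0)))
    | one => simpa using SimpleGraph.Reachable.refl v0
    | mul x y hx hy ihx ihy =>
      refine ihx.trans ?_
      have := R2 x v0 (y • v0) ihy
      rwa [smul_smul] at this
    | inv x hx ihx =>
      have := R2 x⁻¹ v0 (x • v0) ihx
      rw [inv_smul_smul] at this
      simpa using this.symm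
  have covConn : (covG T S Y).Connected := by
    haveI : Nonempty V := ⟨v0⟩
    refine ⟨fun a b => ?_⟩
    have key : ∀ a : V, (covG T S Y).Reachable v0 a := by
      intro a
      obtain ⟨g, u, hu, rfl⟩ := hfd a
      exact (Q g).trans (R2 g v0 u (R1 v0 hv0 u hu))
    exact (key a).symm.trans (key b)
  -- now the spanning connected subgraph of a tree is the whole tree
  classical
  intro a b hab
  obtain ⟨p⟩ := covConn a b
  have hedges : ∀ e ∈ p.edges, e ∈ T.edgeSet := by
    intro e he
    have := p.edges_subset_edgeSet he
    revert this
    refine e.ind (fun x y => ?_)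
    intro h
    exact ((SimpleGraph.mem_edgeSet _).mp h).1
  set q : T.Walk a b := p.transfer T hedges with hq
  have hqe : q.edges = p.edges := SimpleGraph.Walk.edges_transfer p hedges
  have hP : SimpleGraph.Path.singleton hab = q.toPath :=
    htree.IsAcyclic.path_unique _ _
  have hmem : s(a, b) ∈ (q.toPath : T.Walk a b).edges := by
    rw [← hP]
    simp [SimpleGraph.Path.singleton]
  have hmem2 : s(a, b) ∈ p.edges := by
    rw [← hqe]
    exact SimpleGraph.Walk.edges_toPath_subset q hmem
  have := p.edges_subset_edgeSet hmem2
  exact (SimpleGraph.mem_edgeSet _).mp this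

end AuxProof


/-- Lemma: the two generating sets are equivalent.
Let `(Γ,𝒢)` be a finite graph of groups with Bass–Serre tree `T` and `G = π₁(Γ,𝒢)`;
let `Γ̃` be a lift of `Γ` in `T` (a finite-subtree fundamental domain) of diameter `D`
with base vertex `ṽ₀`.  Then the generating set
`X = {g ∈ G : d_T(ṽ₀, g ṽ₀) ≤ 2D+1}` and the standard generating set
`Y = (⊔_v G_v) ⊔ {stable letters}` are equivalent: `sup_{y ∈ Y} |y|_X < ∞` and every
`x ∈ X` has `Y`-word length at most `4D+3`. -/
theorem generating_sets_equivalent_for_finite_graph_of_groups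
    {V G : Type*} [Group G] [MulAction G V] (T : SimpleGraph V)
    (htree : T.IsTree) (hact : IsGraphAction G T) (hinv : NoEdgeInversions G T)
    -- `S` is (the vertex set of) a lift `Γ̃` of the finite graph `Γ` in `T`,
    -- i.e. a finite subtree which is a fundamental domain for the action
    (S : Set V) (hSfin : S.Finite) (hSconn : (T.induce S).Connected)
    (hfd : ∀ v : V, ∃ g : G, ∃ u ∈ S, g • u = v)
    (htrans : ∀ u ∈ S, ∀ u' ∈ S, (∃ g : G, g • u = u') → u = u')
    -- `D` is the diameter of `Γ̃` and `ṽ₀` a base vertex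
    (D : ℕ) (hDub : ∀ u ∈ S, ∀ u' ∈ S, T.dist u u' ≤ D)
    (hDattained : ∃ u ∈ S, ∃ u' ∈ S, T.dist u u' = D)
    (v0 : V) (hv0 : v0 ∈ S)
    -- `F` is the set of stable letters, and `Y` the standard generating set
    (F : Set G) (hF : ∀ f ∈ F, ∃ u ∈ S, ∃ w ∈ S, T.Adj u (f • w))
    (Y : Set G) (hY : Y = (⋃ u ∈ S, (MulAction.stabilizer G u : Set G)) ∪ F)
    (hYgen : Subgroup.closure Y = ⊤)
    (X : Set G) (hX : X = {g : G | T.dist v0 (g • v0) ≤ 2 * D + 1}) :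
    GenSetDominatedBy X Y ∧ (∀ x ∈ X, wordLength Y x ≤ 4 * D + 3) := by
  have hconn := htree.isConnected
  constructor
  · -- Part 1 : every y ∈ Y lies in X, so it has X-word length ≤ 1
    refine ⟨1, fun y hy => ?_⟩
    have hyX : y ∈ X := by
      rw [hX]
      rw [hY] at hy
      rcases hy with hy | hy
      · obtain ⟨u, hu⟩ := Set.mem_iUnion.mp hy
        obtain ⟨huS, hyu⟩ := Set.mem_iUnion.mp hu
        have hfix : y • u = u := hyu
        have h1 : T.dist v0 (y • v0) ≤ T.dist v0 u + T.dist u (y • v0) :=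
          hconn.dist_triangle
        have h2 : T.dist u (y • v0) = T.dist u v0 := by
          conv_lhs => rw [← hfix]
          rw [dist_smul_eq T hconn hact]
        have h3 : T.dist u v0 ≤ D := hDub u huS v0 hv0
        have h4 : T.dist v0 u ≤ D := hDub v0 hv0 u huS
        simp only [Set.mem_setOf_eq]
        omega
      · obtain ⟨u, huS, w, hwS, hadj⟩ := hF y hy
        have h1 : T.dist v0 (y • v0) ≤ T.dist v0 u + T.dist u (y • v0) :=
          hconn.dist_triangle
        have h2 : T.dist u (y • v0) ≤ T.dist u (y • w) + T.dist (y • w) (y • v0) :=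
          hconn.dist_triangle
        have h3 : T.dist u (y • w) ≤ 1 := by
          have := SimpleGraph.dist_le hadj.toWalk
          simpa using this
        have h4 : T.dist (y • w) (y • v0) ≤ D := by
          rw [dist_smul_eq T hconn hact]
          exact hDub w hwS v0 hv0
        have h5 : T.dist v0 u ≤ D := hDub v0 hv0 u huS
        simp only [Set.mem_setOf_eq]
        omega
    have : (1 : ℕ) ∈ {n : ℕ | ∃ l : List G,
        (∀ a ∈ l, a ∈ X ∨ a⁻¹ ∈ X) ∧ l.prod = y ∧ l.length = n} :=
      ⟨[y], by simpa using Or.inl hyX, by simp, by simp⟩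
    exact Nat.sInf_le this
  · -- Part 2
    have hcovadj := adj_covG_of_adj T htree hact S hSconn hfd v0 hv0 F hF Y hY hYgen
    -- crossing: any neighbour of a point of S lies in hS for an h of Y-length ≤ 2
    have cross : ∀ u ∈ S, ∀ w : V, T.Adj u w →
        ∃ l : List G, (∀ a ∈ l, a ∈ Y ∨ a⁻¹ ∈ Y) ∧ l.length ≤ 2 ∧
          ∃ s ∈ S, l.prod • s = w := by
      intro u hu w hadj
      obtain ⟨-, g, y, u₁, s₁, hu₁, hs₁, hy, hc⟩ := hcovadj u w hadj
      rcases hc with ⟨h1, h2⟩ | ⟨h1, h2⟩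
      · -- u = g • u₁ and w = g • y • s₁
        have hu₁u : u₁ = u := htrans u₁ hu₁ u hu ⟨g, h1.symm⟩
        have hgstab : g ∈ MulAction.stabilizer G u := by
          rw [MulAction.mem_stabilizer_iff]
          rw [hu₁u] at h1
          exact h1.symm
        have hgY : g ∈ Y := by
          rw [hY]
          exact Or.inl (Set.mem_iUnion.mpr ⟨u, Set.mem_iUnion.mpr ⟨hu, hgstab⟩⟩)
        rcases hy with hy1 | hy
        · refine ⟨[g], by simp [hgY], by simp, s₁, hs₁, ?_⟩
          simp only [List.prod_cons, List.prod_nil, mul_one]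
          rw [h2, hy1, one_smul]
        · refine ⟨[g, y], ?_, by simp, s₁, hs₁, ?_⟩
          · intro a ha
            simp only [List.mem_cons, List.not_mem_nil, or_false] at ha
            rcases ha with rfl | rfl
            · exact Or.inl hgY
            · exact hy
          · simp only [List.prod_cons, List.prod_nil, mul_one, mul_smul]
            exact h2.symm
      · -- w = g • u₁ and u = g • y • s₁
        have hgys : (g * y) • s₁ = u := by rw [mul_smul]; exact h2.symm
        have hs₁u : s₁ = u := htrans s₁ hs₁ u hu ⟨g * y, hgys⟩
        have hgystab : g * y ∈ MulAction.stabilizer G u := by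
          rw [MulAction.mem_stabilizer_iff]
          rw [hs₁u] at hgys
          exact hgys
        have hgyY : g * y ∈ Y := by
          rw [hY]
          exact Or.inl (Set.mem_iUnion.mpr ⟨u, Set.mem_iUnion.mpr ⟨hu, hgystab⟩⟩)
        rcases hy with hy1 | hy
        · refine ⟨[g * y], by simp [hgyY], by simp, u₁, hu₁, ?_⟩
          simp only [List.prod_cons, List.prod_nil, mul_one, hy1]
          rw [h1]
        · refine ⟨[g * y, y⁻¹], ?_, by simp, u₁, hu₁, ?_⟩
          · intro a ha
            simp only [List.mem_cons, List.not_mem_nil, or_false] at ha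
            rcases ha with rfl | rfl
            · exact Or.inl hgyY
            · rcases hy with hy | hy
              · exact Or.inr (by simpa using hy)
              · exact Or.inl hy
          · simp only [List.prod_cons, List.prod_nil, mul_one, mul_inv_cancel_right]
            exact h1.symm
    -- main induction along a walk
    have main : ∀ (w x : V) (p : T.Walk w x), x ∈ S →
        ∃ l : List G, (∀ a ∈ l, a ∈ Y ∨ a⁻¹ ∈ Y) ∧ l.length ≤ 2 * p.length ∧
          ∃ s ∈ S, l.prod • s = w := by
      intro w x p
      induction p with
      | nil =>
        intro hx
        exact ⟨[], by simp, by simp, _, hx, by simp⟩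
      | @cons w y x h q ih =>
        intro hx
        obtain ⟨l', hl', hlen', s', hs', hks'⟩ := ih hx
        have hadj2 : T.Adj (l'.prod⁻¹ • w) s' := by
          have h' : T.Adj w (l'.prod • s') := by rw [hks']; exact h
          have := (hact l'.prod⁻¹ w (l'.prod • s')).mp h'
          rwa [inv_smul_smul] at this
        obtain ⟨l₂, hl₂, hlen₂, s, hs, hprod₂⟩ := cross s' hs' (l'.prod⁻¹ • w) hadj2.symm
        refine ⟨l' ++ l₂, ?_, ?_, s, hs, ?_⟩
        · intro a ha
          rcases List.mem_append.mp ha with h' | h'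
          · exact hl' a h'
          · exact hl₂ a h'
        · rw [List.length_append]
          simp only [SimpleGraph.Walk.length_cons]
          omega
        · rw [List.prod_append, mul_smul, hprod₂, smul_inv_smul]
    -- conclude
    intro x hx
    rw [hX] at hx
    obtain ⟨p, hp⟩ := hconn.exists_walk_length_eq_dist (x • v0) v0
    have hplen : p.length ≤ 2 * D + 1 := by
      rw [hp, SimpleGraph.dist_comm]
      exact hx
    obtain ⟨l, hl, hlen, s, hs, hprod⟩ := main (x • v0) v0 p hv0
    have hz : (l.prod⁻¹ * x) • v0 = s := by
      rw [mul_smul, ← hprod, inv_smul_smul]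
    have hsv0 : v0 = s := htrans v0 hv0 s hs ⟨l.prod⁻¹ * x, hz⟩
    have hzstab : (l.prod⁻¹ * x) ∈ MulAction.stabilizer G v0 := by
      rw [MulAction.mem_stabilizer_iff, hz, hsv0]
    have hzY : l.prod⁻¹ * x ∈ Y := by
      rw [hY]
      exact Or.inl (Set.mem_iUnion.mpr ⟨v0, Set.mem_iUnion.mpr ⟨hv0, hzstab⟩⟩)
    have hmem : (l ++ [l.prod⁻¹ * x]).length ∈ {n : ℕ | ∃ l' : List G,
        (∀ a ∈ l', a ∈ Y ∨ a⁻¹ ∈ Y) ∧ l'.prod = x ∧ l'.length = n} := by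
      refine ⟨l ++ [l.prod⁻¹ * x], ?_, ?_, rfl⟩
      · intro a ha
        rcases List.mem_append.mp ha with h' | h'
        · exact hl a h'
        · simp only [List.mem_singleton] at h'
          subst h'
          exact Or.inl hzY
      · rw [List.prod_append]
        simp [mul_inv_cancel_left]
    have h1 : wordLength Y x ≤ (l ++ [l.prod⁻¹ * x]).length := Nat.sInf_le hmem
    have h2 : (l ++ [l.prod⁻¹ * x]).length ≤ 4 * D + 3 := by
      rw [List.length_append]
      simp only [List.length_singleton]
      omega
    omega
end
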